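/- Consider a commutative cube in a category C with pullbacks whose left, back, bottom, and top faces are pullbacks, whose top face is a stable pushout, and such that the two morphisms forming the front-facing edges of the top and bottom faces (p' and p) are monomorphisms. Then the right face of the cube is a pullback. -/
import Mathlib


open CategoryTheory CategoryTheory.Limits

universe v u

variable {C : Type u} [Category.{v} C]

/-- A pushout square is *stable* if every pullback of it (in the sense of a
commutative cube all of whose vertical faces are pullbacks and whose bottom
face is the given square) has a pushout as its top face. -/
def StablePushout {X Y Z W : C} (f : X ⟶ Y) (g : X ⟶ Z) (inl : Y ⟶ W) (inr : Z ⟶ W) : Prop :=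
  IsPushout f g inl inr ∧
  ∀ ⦃X' Y' Z' W' : C⦄ (f' : X' ⟶ Y') (g' : X' ⟶ Z') (inl' : Y' ⟶ W') (inr' : Z' ⟶ W')
    (x : X' ⟶ X) (y : Y' ⟶ Y) (z : Z' ⟶ Z) (w : W' ⟶ W),
    f' ≫ inl' = g' ≫ inr' →
    IsPullback f' x y f → IsPullback g' x z g →
    IsPullback inl' y w inl → IsPullback inr' z w inr →
    IsPushout f' g' inl' inr'

/-- A pushout square is a *Van Kampen square* if for every commutative cube over it
whose back and left faces (the faces over the two span legs) are pullbacks, the top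
face is a pushout iff the front and right faces are pullbacks. -/
def VanKampenSquare {X Y Z W : C} (f : X ⟶ Y) (g : X ⟶ Z) (inl : Y ⟶ W) (inr : Z ⟶ W) : Prop :=
  IsPushout f g inl inr ∧
  ∀ ⦃X' Y' Z' W' : C⦄ (f' : X' ⟶ Y') (g' : X' ⟶ Z') (inl' : Y' ⟶ W') (inr' : Z' ⟶ W')
    (x : X' ⟶ X) (y : Y' ⟶ Y) (z : Z' ⟶ Z) (w : W' ⟶ W),
    f' ≫ inl' = g' ≫ inr' →
    IsPullback f' x y f → IsPullback g' x z g →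
    inl' ≫ w = y ≫ inl → inr' ≫ w = z ≫ inr →
    (IsPushout f' g' inl' inr' ↔ (IsPullback inl' y w inl ∧ IsPullback inr' z w inr))

/-- A morphism `m : X ⟶ Y` is `N`-preadhesive if for every `n : X ⟶ Z` in `N` there is
a stable pushout square of `m` along `n` which is also a pullback square. -/
def Preadhesive (N : MorphismProperty C) {X Y : C} (m : X ⟶ Y) : Prop :=
  ∀ ⦃Z : C⦄ (n : X ⟶ Z), N n →
    ∃ (W : C) (p : Z ⟶ W) (q : Y ⟶ W),
      StablePushout n m p q ∧ IsPullback n m p q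

/-- A morphism is `N`-adhesive if all of its pullbacks are `N`-preadhesive. -/
def NAdhesive (N : MorphismProperty C) {X Y : C} (m : X ⟶ Y) : Prop :=
  ∀ ⦃X' Y' : C⦄ (m' : X' ⟶ Y') (x : X' ⟶ X) (y : Y' ⟶ Y),
    IsPullback m' x y m → Preadhesive N m'

/-- A *matching class*: contains all isos, closed under composition and decomposition,
stable under pullbacks and pushouts. -/
structure MatchingClass (N : MorphismProperty C) : Prop where
  iso_mem : ∀ ⦃X Y : C⦄ (f : X ⟶ Y), IsIso f → N f
  comp_mem : ∀ ⦃X Y Z : C⦄ (f : X ⟶ Y) (g : Y ⟶ Z), N f → N g → N (f ≫ g)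
  decomp : ∀ ⦃X Y Z : C⦄ (f : X ⟶ Y) (g : Y ⟶ Z), N (f ≫ g) → N g → N f
  pullback_stable : ∀ ⦃P X Y Z : C⦄ (fst : P ⟶ X) (snd : P ⟶ Y) (f : X ⟶ Z) (g : Y ⟶ Z),
    IsPullback fst snd f g → N f → N snd
  pushout_stable : ∀ ⦃Z X Y P : C⦄ (f : Z ⟶ X) (g : Z ⟶ Y) (inl : X ⟶ P) (inr : Y ⟶ P),
    IsPushout f g inl inr → N g → N inl

/-- A *stable system of monos*. -/
structure StableSystem (M : MorphismProperty C) : Prop where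
  mono : ∀ ⦃X Y : C⦄ (f : X ⟶ Y), M f → Mono f
  iso_mem : ∀ ⦃X Y : C⦄ (f : X ⟶ Y), IsIso f → M f
  comp_mem : ∀ ⦃X Y Z : C⦄ (f : X ⟶ Y) (g : Y ⟶ Z), M f → M g → M (f ≫ g)
  pullback_stable : ∀ ⦃P X Y Z : C⦄ (fst : P ⟶ X) (snd : P ⟶ Y) (f : X ⟶ Z) (g : Y ⟶ Z),
    IsPullback fst snd f g → M f → M snd

/-- `C` is `M`-adhesive: `M`-pullbacks exist, and pushouts along arrows of `M`
(along arbitrary morphisms) exist and are Van Kampen squares. -/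
def MAdhesive (M : MorphismProperty C) : Prop :=
  (∀ ⦃X Y Z : C⦄ (m : X ⟶ Y) (g : Z ⟶ Y), M m →
    ∃ (P : C) (p : P ⟶ X) (q : P ⟶ Z), IsPullback p q m g) ∧
  (∀ ⦃X Y Z : C⦄ (m : X ⟶ Y) (f : X ⟶ Z), M m →
    ∃ (W : C) (inl : Z ⟶ W) (inr : Y ⟶ W), VanKampenSquare f m inl inr)

/-- The class of regular monomorphisms. -/
def RegMonos (C : Type u) [Category.{v} C] : MorphismProperty C :=
  fun _ _ f => Nonempty (RegularMono f)


/-- In a cube whose left, back, bottom, top faces are pullbacks, whose top face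
is a stable pushout and with `p`, `p'` monos, the right face is a pullback. -/
theorem stmt12 [HasPullbacks C]
    {X Y Z W X' Y' Z' W' : C}
    (n : X ⟶ Z) (m : X ⟶ Y) (p : Z ⟶ W) (q : Y ⟶ W)
    (n' : X' ⟶ Z') (m' : X' ⟶ Y') (p' : Z' ⟶ W') (q' : Y' ⟶ W')
    (x : X' ⟶ X) (y : Y' ⟶ Y) (z : Z' ⟶ Z) (w : W' ⟶ W)
    (hleft : IsPullback m' x y m)
    (hback : IsPullback n' x z n)
    (hbot : IsPullback n m p q)
    (htop : IsPullback n' m' p' q')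
    (htoppo : StablePushout n' m' p' q')
    (hfront : q' ≫ w = y ≫ q)
    (hright : p' ≫ w = z ≫ p)
    [Mono p] [Mono p'] :
    IsPullback p' z w p := by
  -- the comparison object `V = Z ×_W W'` and the induced map `u : Z' ⟶ V`
  let V : C := pullback p w
  let k : V ⟶ Z := pullback.fst p w
  let l : V ⟶ W' := pullback.snd p w
  have hV : IsPullback k l p w := IsPullback.of_hasPullback p w
  let u : Z' ⟶ V := pullback.lift z p' hright.symm
  have hu1 : u ≫ k = z := pullback.lift_fst _ _ _
  have hu2 : u ≫ l = p' := pullback.lift_snd _ _ _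
  -- since `p` is a mono, `(z, 𝟙, p, z ≫ p)` is a pullback
  have hmono : IsPullback (𝟙 Z) (𝟙 Z) p p := IsKernelPair.id_of_mono p
  have hzbig : IsPullback z (𝟙 Z') p (z ≫ p) := by
    have := (IsPullback.of_vert_isIso (f := 𝟙 Z) (snd := 𝟙 Z')
      (fst := z) (g := z) ⟨by simp⟩).paste_horiz hmono
    simpa using this
  -- key: `(u, 𝟙, l, p')` is a pullback
  have K : IsPullback u (𝟙 Z') l p' := by
    refine IsPullback.of_right ?_ (by simp [hu2]) hV
    rw [hu1, hright]
    exact hzbig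
  -- pull the top pushout back along `l`
  let Y'' : C := pullback q' l
  let vY : Y'' ⟶ Y' := pullback.fst q' l
  let q₂ : Y'' ⟶ V := pullback.snd q' l
  have hY : IsPullback vY q₂ q' l := IsPullback.of_hasPullback q' l
  let m'' : X' ⟶ Y'' := pullback.lift m' (n' ≫ u)
    (by rw [Category.assoc, hu2, htop.w])
  have hm1 : m'' ≫ vY = m' := pullback.lift_fst _ _ _
  have hm2 : m'' ≫ q₂ = n' ≫ u := pullback.lift_snd _ _ _
  have hback' : IsPullback n' (𝟙 X') (𝟙 Z') n' := IsPullback.of_id_snd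
  have hbigL : IsPullback (n' ≫ u) (𝟙 X') l (n' ≫ p') := by
    simpa using hback'.paste_horiz K
  have hleft' : IsPullback m'' (𝟙 X') vY m' := by
    refine IsPullback.of_right ?_ (by simp [hm1]) hY.flip
    rw [hm2, ← htop.w]
    exact hbigL
  -- stability gives a pushout on top of the pulled-back cube
  have HPO : IsPushout n' m'' u q₂ :=
    htoppo.2 n' m'' u q₂ (𝟙 X') (𝟙 Z') vY l hm2.symm hback' hleft' K hY.flip
  -- construct the retraction `r : Y'' ⟶ Z'` of `q₂` over `u`
  have hg : (q₂ ≫ k) ≫ p = (vY ≫ y) ≫ q := by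
    rw [Category.assoc, hV.w, ← Category.assoc, ← hY.w, Category.assoc, hfront,
      ← Category.assoc, Category.assoc]
  let g : Y'' ⟶ X := hbot.lift (q₂ ≫ k) (vY ≫ y) hg
  have hg1 : g ≫ n = q₂ ≫ k := hbot.lift_fst _ _ _
  have hg2 : g ≫ m = vY ≫ y := hbot.lift_snd _ _ _
  let h : Y'' ⟶ X' := hleft.lift vY g hg2.symm
  have hh1 : h ≫ m' = vY := hleft.lift_fst _ _ _
  have hh2 : h ≫ x = g := hleft.lift_snd _ _ _
  let r : Y'' ⟶ Z' := h ≫ n'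
  have hru : r ≫ u = q₂ := by
    apply pullback.hom_ext
    · show (r ≫ u) ≫ k = q₂ ≫ k
      rw [Category.assoc, hu1]
      show (h ≫ n') ≫ z = q₂ ≫ k
      rw [Category.assoc, hback.w, ← Category.assoc, hh2, hg1]
    · show (r ≫ u) ≫ l = q₂ ≫ l
      rw [Category.assoc, hu2]
      show (h ≫ n') ≫ p' = _
      rw [Category.assoc, htop.w, ← Category.assoc, hh1, hY.w]
  -- `u` is mono since `p'` is
  have hmu : Mono u := by
    have : Mono (u ≫ l) := by rw [hu2]; infer_instance
    exact mono_of_mono u l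
  have hmr : m'' ≫ r = n' := by
    rw [← cancel_mono u, Category.assoc, hru, hm2]
  -- the inverse of `u`
  let s : V ⟶ Z' := HPO.desc (𝟙 Z') r (by rw [Category.comp_id, hmr])
  have hus : u ≫ s = 𝟙 Z' := HPO.inl_desc _ _ _
  have hqs : q₂ ≫ s = r := HPO.inr_desc _ _ _
  have hsu : s ≫ u = 𝟙 V := by
    apply HPO.hom_ext
    · rw [← Category.assoc, hus, Category.id_comp, Category.comp_id]
    · rw [← Category.assoc, hqs, hru, Category.comp_id]
  haveI : IsIso u := ⟨s, hus, hsu⟩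
  -- transport the pullback square `V` along the iso `u`
  have S1 : IsPullback z u (𝟙 Z) k := IsPullback.of_vert_isIso ⟨by simp [hu1]⟩
  have final : IsPullback z p' p w := by simpa [hu2] using S1.paste_vert hV
  exact final.flip
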